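/- Let Q be a finite quiver in which any two cycles sharing a common vertex have the same set of arrows. Let p₁,…,p_m (m ≥ 1) be paths in Q, and let σ and τ be permutations of {1,…,m} such that both concatenations p_{σ(1)}p_{σ(2)}⋯p_{σ(m)} and p_{τ(1)}p_{τ(2)}⋯p_{τ(m)} are defined (i.e., t(p_{σ(h)}) = s(p_{σ(h+1)}) for all 1 ≤ h ≤ m−1, and likewise for τ). If s(p_{σ(1)}) = s(p_{τ(1)}) and t(p_{σ(m)}) = t(p_{τ(m)}), then the concatenated paths p_{σ(1)}⋯p_{σ(m)} and p_{τ(1)}⋯p_{τ(m)} are equal as paths in Q. -/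

import Mathlib

structure Quiv where
  V : Type
  A : Type
  [fintV : Fintype V]
  [fintA : Fintype A]
  s : A → V
  t : A → V

attribute [instance] Quiv.fintV Quiv.fintA

inductive Quiv.IsPathFrom (Q : Quiv) : Q.V → List Q.A → Q.V → Prop
  | nil (v : Q.V) : Q.IsPathFrom v [] v
  | cons {l : List Q.A} {v : Q.V} (a : Q.A) :
      Q.IsPathFrom (Q.t a) l v → Q.IsPathFrom (Q.s a) (a :: l) v

/-- A path in a quiver: a start vertex, a compatible list of arrows, and an end vertex. -/
structure Quiv.QPath (Q : Quiv) where
  src : Q.V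
  arrows : List Q.A
  tgt : Q.V
  isPath : Q.IsPathFrom src arrows tgt

theorem Quiv.IsPathFrom.append {Q : Quiv} {u v w : Q.V} {l l' : List Q.A}
    (h1 : Q.IsPathFrom u l v) : Q.IsPathFrom v l' w → Q.IsPathFrom u (l ++ l') w := by
  induction h1 with
  | nil _ => exact id
  | cons a _ ih => exact fun h2 => .cons a (ih h2)

/-- The lazy path at a vertex. -/
def Quiv.QPath.lazy (Q : Quiv) (v : Q.V) : Q.QPath := ⟨v, [], v, .nil v⟩

/-- Concatenation of composable paths. -/
def Quiv.QPath.comp {Q : Quiv} (p q : Q.QPath) (h : p.tgt = q.src) : Q.QPath :=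
  ⟨p.src, p.arrows ++ q.arrows, q.tgt, p.isPath.append (h.symm ▸ q.isPath)⟩

/-- The length-one path given by a single arrow. -/
def Quiv.QPath.ofArrow (Q : Quiv) (a : Q.A) : Q.QPath :=
  ⟨Q.s a, [a], Q.t a, .cons a (.nil _)⟩

/-- A path algebra of the quiver `Q` over `F`: an `F`-algebra `A` together with a basis
`b` indexed by the paths of `Q`, multiplying by concatenation. -/
structure PathAlgebra (F : Type) [Field F] (Q : Quiv) (A : Type) [Ring A] [Algebra F A] where
  b : Q.QPath → A
  indep : LinearIndependent F b
  spans : Submodule.span F (Set.range b) = ⊤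
  mul_comp : ∀ (p q : Q.QPath) (h : p.tgt = q.src), b p * b q = b (p.comp q h)
  mul_zero : ∀ p q : Q.QPath, p.tgt ≠ q.src → b p * b q = 0
  sum_lazy : ∑ v : Q.V, b (Quiv.QPath.lazy Q v) = 1

/-- `f` is a polynomial identity for the `F`-algebra `A`. -/
def IsPolyId (F : Type) [Field F] (A : Type) [Ring A] [Algebra F A]
    (f : FreeAlgebra F ℕ) : Prop :=
  ∀ φ : FreeAlgebra F ℕ →ₐ[F] A, φ f = 0

/-- `A` is a PI algebra: it has a nonzero polynomial identity. -/
def IsPI (F : Type) [Field F] (A : Type) [Ring A] [Algebra F A] : Prop :=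
  ∃ f : FreeAlgebra F ℕ, f ≠ 0 ∧ IsPolyId F A f

/-- A cycle: a nonempty closed path with pairwise distinct source vertices. -/
def Quiv.QPath.IsCycle {Q : Quiv} (c : Q.QPath) : Prop :=
  c.arrows ≠ [] ∧ c.tgt = c.src ∧ (c.arrows.map Q.s).Nodup

/-- The standard identity `St_N` holds in `A`. -/
def SatisfiesStandardIdentity (A : Type) [Ring A] (N : ℕ) : Prop :=
  ∀ a : Fin N → A,
    ∑ σ : Equiv.Perm (Fin N), (Equiv.Perm.sign σ : ℤ) • (List.ofFn fun i => a (σ i)).prod = 0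

/-- key lemma. In a finite quiver where any two cycles sharing a vertex
have the same set of arrows, two defined concatenations (along permutations `σ`, `τ`) of
the same family of paths `p₁,…,p_m`, having the same start and the same end, are equal
as paths of `Q`. -/
-- auxiliary lemmas

lemma Quiv.IsPathFrom.cons_elim {Q : Quiv} {v w : Q.V} {a : Q.A} {l : List Q.A}
    (h : Q.IsPathFrom v (a :: l) w) : v = Q.s a ∧ Q.IsPathFrom (Q.t a) l w := by
  cases h; exact ⟨rfl, by assumption⟩

lemma Quiv.IsPathFrom.split {Q : Quiv} {v w : Q.V} (l1 : List Q.A) {l2 : List Q.A}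
    (h : Q.IsPathFrom v (l1 ++ l2) w) : ∃ u, Q.IsPathFrom v l1 u ∧ Q.IsPathFrom u l2 w := by
  induction l1 generalizing v with
  | nil => exact ⟨v, .nil v, h⟩
  | cons a l ih =>
    rw [List.cons_append] at h
    obtain ⟨rfl, h'⟩ := h.cons_elim
    obtain ⟨u, h1, h2⟩ := ih h'
    exact ⟨u, .cons a h1, h2⟩

lemma exists_dup {α β : Type*} (f : α → β) : ∀ l : List α, ¬ (l.map f).Nodup →
    ∃ l1 x l2 y l3, l = l1 ++ (x :: (l2 ++ (y :: l3))) ∧ f x = f y := by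
  intro l h
  induction l with
  | nil => simp at h
  | cons a l ih =>
    by_cases h2 : (l.map f).Nodup
    · have : f a ∈ l.map f := by
        by_contra hc; exact h (by simp only [List.map_cons, List.nodup_cons]; exact ⟨hc, h2⟩)
      obtain ⟨x, hx, hfx⟩ := List.mem_map.mp this
      obtain ⟨l2, l3, rfl⟩ := List.append_of_mem hx
      exact ⟨[], a, l2, x, l3, by simp, hfx.symm⟩
    · obtain ⟨l1, x, l2, y, l3, rfl, hxy⟩ := ih h2
      exact ⟨a :: l1, x, l2, y, l3, by simp, hxy⟩

/-- every arrow on a closed walk lies on a cycle -/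
lemma arrow_on_cycle {Q : Quiv} : ∀ n (l : List Q.A), l.length ≤ n → ∀ v : Q.V,
    Q.IsPathFrom v l v → ∀ a ∈ l, ∃ c : Q.QPath, c.IsCycle ∧ a ∈ c.arrows := by
  intro n
  induction n with
  | zero => intro l hl v _ a ha; simp [List.length_eq_zero_iff.mp (Nat.le_zero.mp hl)] at ha
  | succ n ih =>
    intro l hl v hpath a ha
    by_cases hnd : (l.map Q.s).Nodup
    · refine ⟨⟨v, l, v, hpath⟩, ⟨?_, rfl, hnd⟩, ha⟩
      rintro rfl; simp at ha
    · obtain ⟨l1, x, l2, y, l3, rfl, hxy⟩ := exists_dup Q.s _ hnd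
      obtain ⟨u1, hp1, hp⟩ := Quiv.IsPathFrom.split l1 hpath
      obtain ⟨rfl, hp'⟩ := hp.cons_elim
      obtain ⟨u2, hp2, hp3⟩ := Quiv.IsPathFrom.split l2 hp'
      obtain ⟨rfl, hp3'⟩ := hp3.cons_elim
      -- inner closed walk: x :: l2, from s x to s y = s x
      have hinner : Q.IsPathFrom (Q.s x) (x :: l2) (Q.s x) :=
        hxy.symm ▸ (Quiv.IsPathFrom.cons x hp2)
      -- outer closed walk: l1 ++ y :: l3 from v to v
      have houter : Q.IsPathFrom v (l1 ++ y :: l3) v :=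
        hp1.append (hxy.symm ▸ (Quiv.IsPathFrom.cons y hp3'))
      have hlen : (l1 ++ (x :: l2 ++ y :: l3)).length ≤ n + 1 := hl
      simp only [List.length_append, List.length_cons] at hlen
      rcases List.mem_append.mp ha with ha1 | ha2
      · -- a ∈ l1 : outer
        refine ih (l1 ++ y :: l3) (by simp; omega) v houter a (by simp [ha1])
      · rcases List.mem_cons.mp ha2 with rfl | ha3
        · exact ih (a :: l2) (by simp; omega) _ hinner a (by simp)
        · rcases List.mem_append.mp ha3 with ha4 | ha5
          · exact ih (x :: l2) (by simp; omega) _ hinner a (by simp [ha4])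
          · exact ih (l1 ++ y :: l3) (by simp; omega) v houter a (by simp [ha5])

/-- two walks from the same vertex with the same multiset of arrows are equal -/
lemma walks_eq {Q : Quiv}
    (hcyc : ∀ c₁ c₂ : Q.QPath, c₁.IsCycle → c₂.IsCycle →
      (∃ v : Q.V, v ∈ c₁.arrows.map Q.s ∧ v ∈ c₂.arrows.map Q.s) →
      (∀ a : Q.A, a ∈ c₁.arrows ↔ a ∈ c₂.arrows)) :
    ∀ (l1 : List Q.A) {l2 : List Q.A} {v w1 w2 : Q.V},
      Q.IsPathFrom v l1 w1 → Q.IsPathFrom v l2 w2 → l1.Perm l2 → l1 = l2 := by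
  intro l1
  induction l1 with
  | nil =>
    intro l2 v w1 w2 _ _ hperm
    exact (List.Perm.nil_eq hperm).symm ▸ rfl
  | cons a x ih =>
    intro l2 v w1 w2 h1 h2 hperm
    cases l2 with
    | nil => exact absurd hperm.symm (by simp)
    | cons b y =>
      obtain ⟨hva, h1'⟩ := h1.cons_elim
      obtain ⟨hvb, h2'⟩ := h2.cons_elim
      subst hva
      by_cases hab : a = b
      · subst hab
        have : x = y := ih h1' h2' hperm.cons_inv
        rw [this]
      · exfalso
        have hbx : b ∈ x := by
          have : b ∈ a :: x := hperm.mem_iff.mpr (by simp)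
          rcases this with _ | h; · exact absurd rfl hab
          · assumption
        obtain ⟨x1, x2, rfl⟩ := List.append_of_mem hbx
        obtain ⟨u, hpa, hpb⟩ := Quiv.IsPathFrom.split x1 h1'
        obtain ⟨hub, _⟩ := hpb.cons_elim
        -- closed walk a :: x1 from s a to s a
        have hsab : Q.s a = Q.s b := hvb
        have hclosed1 : Q.IsPathFrom (Q.s a) (a :: x1) (Q.s a) := by
          have h' : Q.IsPathFrom (Q.s a) (a :: x1) (Q.s b) :=
            Quiv.IsPathFrom.cons a (hub ▸ hpa)
          exact hsab.symm ▸ h'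
        obtain ⟨c1, hc1, hac1⟩ := arrow_on_cycle (a :: x1).length _ le_rfl _ hclosed1 a (by simp)
        -- symmetric: a ∈ y
        have hay : a ∈ y := by
          have : a ∈ b :: y := hperm.mem_iff.mp (by simp)
          rcases this with _ | h; · exact absurd rfl hab
          · assumption
        obtain ⟨y1, y2, rfl⟩ := List.append_of_mem hay
        obtain ⟨u', hpa', hpb'⟩ := Quiv.IsPathFrom.split y1 h2'
        obtain ⟨hua, _⟩ := hpb'.cons_elim
        have hclosed2 : Q.IsPathFrom (Q.s b) (b :: y1) (Q.s b) := by
          have h' : Q.IsPathFrom (Q.s b) (b :: y1) (Q.s a) :=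
            Quiv.IsPathFrom.cons b (hua ▸ hpa')
          exact hsab ▸ h'
        obtain ⟨c2, hc2, hbc2⟩ := arrow_on_cycle (b :: y1).length _ le_rfl _ hclosed2 b (by simp)
        have hshare : ∃ v : Q.V, v ∈ c1.arrows.map Q.s ∧ v ∈ c2.arrows.map Q.s :=
          ⟨Q.s a, List.mem_map_of_mem hac1, hsab ▸ List.mem_map_of_mem hbc2⟩
        have hbc1 : b ∈ c1.arrows := (hcyc c1 c2 hc1 hc2 hshare b).mpr hbc2
        exact hab (List.inj_on_of_nodup_map hc1.2.2 hac1 hbc1 hsab)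

lemma chain_path {Q : Quiv} : ∀ (n : ℕ) (q : Fin (n+1) → Q.QPath),
    (∀ i : Fin n, (q i.castSucc).tgt = (q i.succ).src) →
    Q.IsPathFrom (q 0).src (List.ofFn fun i => (q i).arrows).flatten (q (Fin.last n)).tgt := by
  intro n
  induction n with
  | zero =>
    intro q _
    simpa using (q 0).isPath
  | succ n ih =>
    intro q h
    have ih' := ih (fun i => q i.castSucc) (fun i => by
      show (q i.castSucc.castSucc).tgt = (q i.succ.castSucc).src
      rw [← Fin.succ_castSucc]; exact h i.castSucc)
    rw [List.ofFn_succ' (fun i : Fin (n+2) => (q i).arrows)]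
    simp only [List.concat_eq_append, List.flatten_append, List.flatten_cons, List.flatten_nil,
      List.append_nil]
    have h0 : (Fin.castSucc (0 : Fin (n+1))) = (0 : Fin (n+2)) := rfl
    rw [← h0]
    refine ih'.append ?_
    have := h (Fin.last n)
    rw [Fin.succ_last] at this
    rw [this]
    exact (q (Fin.last (n+1))).isPath

theorem key_lemma_unicursal_paths_equal (Q : Quiv)
    (hcyc : ∀ c₁ c₂ : Q.QPath, c₁.IsCycle → c₂.IsCycle →
      (∃ v : Q.V, v ∈ c₁.arrows.map Q.s ∧ v ∈ c₂.arrows.map Q.s) →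
      (∀ a : Q.A, a ∈ c₁.arrows ↔ a ∈ c₂.arrows))
    (m : ℕ) (hm : 1 ≤ m) (p : Fin m → Q.QPath) (σ τ : Equiv.Perm (Fin m))
    (hσ : ∀ i j : Fin m, (j : ℕ) = (i : ℕ) + 1 → (p (σ i)).tgt = (p (σ j)).src)
    (hτ : ∀ i j : Fin m, (j : ℕ) = (i : ℕ) + 1 → (p (τ i)).tgt = (p (τ j)).src)
    (hs : (p (σ ⟨0, by omega⟩)).src = (p (τ ⟨0, by omega⟩)).src)
    (ht : (p (σ ⟨m - 1, by omega⟩)).tgt = (p (τ ⟨m - 1, by omega⟩)).tgt) :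
    (List.ofFn fun i => (p (σ i)).arrows).flatten
      = (List.ofFn fun i => (p (τ i)).arrows).flatten := by
  obtain ⟨n, rfl⟩ : ∃ n, m = n + 1 := ⟨m - 1, by omega⟩
  have hz : (⟨0, by omega⟩ : Fin (n+1)) = 0 := rfl
  have hpσ := chain_path n (fun i => p (σ i)) (fun i => hσ i.castSucc i.succ (by simp))
  have hpτ := chain_path n (fun i => p (τ i)) (fun i => hτ i.castSucc i.succ (by simp))
  rw [hz] at hs
  rw [hs] at hpσ
  -- permutation of flattened lists
  have hfr : ((List.finRange (n+1)).map (σ.trans τ.symm)).Perm (List.finRange (n+1)) := by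
    refine (List.perm_ext_iff_of_nodup ?_ (List.nodup_finRange _)).mpr ?_
    · exact (List.nodup_finRange _).map (Equiv.injective _)
    · intro i
      simp only [List.mem_map, List.mem_finRange, iff_true]
      exact ⟨(σ.trans τ.symm).symm i, by simp⟩
  have hperm : ((List.ofFn fun i => (p (σ i)).arrows)).Perm
      (List.ofFn fun i => (p (τ i)).arrows) := by
    rw [List.ofFn_eq_map, List.ofFn_eq_map]
    have : (List.finRange (n+1)).map (fun i => (p (σ i)).arrows)
        = ((List.finRange (n+1)).map (σ.trans τ.symm)).map (fun i => (p (τ i)).arrows) := by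
      rw [List.map_map]; congr 1; funext i
      show (p (σ i)).arrows = (p (τ (τ.symm (σ i)))).arrows
      rw [Equiv.apply_symm_apply]
    rw [this]
    exact hfr.map _
  exact walks_eq hcyc _ hpσ hpτ hperm.flatten
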